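/- Let F : Δ_A → [0,1]^K be L-Lipschitz. For every pair of players i, j ∈ {1, …, N}, every strategy profile (π¹, …, π^N) ∈ Δ_A^N, and every π, π̄ ∈ Δ_A, it holds that | E^i_exp(π, π^{−j}) − E^i_exp(π̄, π^{−j}) | ≤ L̄_{j,i} ‖π − π̄‖₂, where L̄_{j,i} = √K if j = i and L̄_{j,i} = 4L√(2K)/N if j ≠ i. -/

import Mathlib

open scoped BigOperators
open MeasureTheory ProbabilityTheory Finset

noncomputable section

/-- The probability simplex over `Fin K`, inside Euclidean space (ℓ2 norm). -/
def simplex (K : ℕ) : Set (EuclideanSpace ℝ (Fin K)) :=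
  {x | (∀ a, 0 ≤ x a) ∧ ∑ a, x a = 1}

/-- Empirical occupancy measure `μ̂ = (1/N) ∑_j e_{a^j}` of an action profile. -/
def empDist (K N : ℕ) (v : Fin N → Fin K) : EuclideanSpace ℝ (Fin K) :=
  (N : ℝ)⁻¹ • ∑ j : Fin N, EuclideanSpace.single (v j) (1 : ℝ)

/-- Expected payoff `V^i(π¹,…,π^N) = E[F(μ̂)(a^i)]`, written as the finite sum over
action profiles weighted by the product of the independent mixed strategies. -/
def Vval (K N : ℕ) (F : EuclideanSpace ℝ (Fin K) → EuclideanSpace ℝ (Fin K))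
    (π : Fin N → EuclideanSpace ℝ (Fin K)) (i : Fin N) : ℝ :=
  ∑ v : Fin N → Fin K, (∏ j : Fin N, π j (v j)) * F (empDist K N v) (v i)

/-- Exploitability `E^i_exp(π¹,…,π^N) = sup_{π′∈Δ} V^i(π′,π^{−i}) − V^i(π¹,…,π^N)`. -/
def expl (K N : ℕ) (F : EuclideanSpace ℝ (Fin K) → EuclideanSpace ℝ (Fin K))
    (π : Fin N → EuclideanSpace ℝ (Fin K)) (i : Fin N) : ℝ :=
  (⨆ p : simplex K, Vval K N F (Function.update π i (p : EuclideanSpace ℝ (Fin K))) i)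
    - Vval K N F π i

variable {K N : ℕ}

lemma empDist_apply (v : Fin N → Fin K) (a : Fin K) :
    empDist K N v a = (N:ℝ)⁻¹ * ∑ j : Fin N, (if a = v j then (1:ℝ) else 0) := by
  simp only [empDist, PiLp.smul_apply, smul_eq_mul]
  rw [WithLp.ofLp_sum, Finset.sum_apply]
  simp [EuclideanSpace.single_apply]

lemma empDist_mem (hN : 0 < N) (v : Fin N → Fin K) : empDist K N v ∈ simplex K := by
  constructor
  · intro a
    rw [empDist_apply]
    have : (0:ℝ) ≤ ∑ j : Fin N, (if a = v j then (1:ℝ) else 0) :=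
      Finset.sum_nonneg fun j _ => by positivity
    positivity
  · have : ∑ a : Fin K, empDist K N v a
        = (N:ℝ)⁻¹ * ∑ j : Fin N, ∑ a : Fin K, (if a = v j then (1:ℝ) else 0) := by
      simp only [empDist_apply, ← Finset.mul_sum]
      rw [Finset.sum_comm]
    rw [show (∑ a, empDist K N v a) = ∑ a : Fin K, empDist K N v a from rfl, this]
    simp
    field_simp

lemma empDist_update_close (hN : 0 < N) (v : Fin N → Fin K) (j : Fin N) (b : Fin K) :
    ‖empDist K N v - empDist K N (Function.update v j b)‖ ≤ 2 / N := by
  have h : empDist K N v - empDist K N (Function.update v j b)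
      = (N:ℝ)⁻¹ • (EuclideanSpace.single (v j) (1:ℝ) - EuclideanSpace.single b 1) := by
    simp only [empDist, ← smul_sub]
    congr 1
    rw [← Finset.sum_sub_distrib]
    rw [Finset.sum_eq_single j]
    · simp
    · intro k _ hk
      simp [Function.update_of_ne hk]
    · simp
  rw [h, norm_smul]
  have h2 : ‖EuclideanSpace.single (v j) (1:ℝ) - EuclideanSpace.single b 1‖ ≤ 2 := by
    calc ‖EuclideanSpace.single (v j) (1:ℝ) - EuclideanSpace.single b 1‖
        ≤ ‖EuclideanSpace.single (v j) (1:ℝ)‖ + ‖EuclideanSpace.single b (1:ℝ)‖ := norm_sub_le _ _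
      _ ≤ 2 := by rw [EuclideanSpace.norm_single, EuclideanSpace.norm_single]; norm_num
  have hNpos : (0:ℝ) < N := by exact_mod_cast hN
  calc ‖(N:ℝ)⁻¹‖ * ‖EuclideanSpace.single (v j) (1:ℝ) - EuclideanSpace.single b 1‖
      ≤ (N:ℝ)⁻¹ * 2 := by
        rw [Real.norm_eq_abs, abs_of_nonneg (by positivity)]
        exact mul_le_mul_of_nonneg_left h2 (by positivity)
    _ = 2 / N := by ring

lemma coord_abs_le_norm (x : EuclideanSpace ℝ (Fin K)) (a : Fin K) : |x a| ≤ ‖x‖ := by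
  rw [EuclideanSpace.norm_eq]
  calc |x a| = Real.sqrt (|x a|^2) := (Real.sqrt_sq (abs_nonneg _)).symm
    _ ≤ Real.sqrt (∑ b, ‖x b‖^2) := by
        apply Real.sqrt_le_sqrt
        have : |x a|^2 = ‖x a‖^2 := by rw [Real.norm_eq_abs]
        rw [this]
        exact Finset.single_le_sum (f := fun b => ‖x b‖^2) (fun b _ => by positivity) (mem_univ a)

lemma l1_le_sqrtK (x : EuclideanSpace ℝ (Fin K)) :
    ∑ a, |x a| ≤ Real.sqrt K * ‖x‖ := by
  have h1 : (∑ a, |x a|)^2 ≤ (K:ℝ) * ∑ a, |x a|^2 := by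
    have := sq_sum_le_card_mul_sum_sq (s := (univ : Finset (Fin K))) (f := fun a => |x a|)
    simpa using this
  have h2 : Real.sqrt ((∑ a, |x a|)^2) ≤ Real.sqrt ((K:ℝ) * ∑ a, |x a|^2) := Real.sqrt_le_sqrt h1
  rw [Real.sqrt_sq (Finset.sum_nonneg fun a _ => abs_nonneg _)] at h2
  rw [Real.sqrt_mul (Nat.cast_nonneg K)] at h2
  refine h2.trans_eq ?_
  rw [EuclideanSpace.norm_eq]
  simp [Real.norm_eq_abs]

lemma sum_prod_eq (h : Fin N → Fin K → ℝ) :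
    ∑ v : Fin N → Fin K, ∏ k, h k (v k) = ∏ k, ∑ a, h k a :=
  (Fintype.prod_sum h).symm

lemma sum_g_prod (π : Fin N → EuclideanSpace ℝ (Fin K)) (hπ : ∀ k, π k ∈ simplex K)
    (j : Fin N) (g : Fin K → ℝ) :
    ∑ v : Fin N → Fin K, g (v j) * ∏ k ∈ univ.erase j, π k (v k) = ∑ a, g a := by
  have h1 : ∀ v : Fin N → Fin K,
      g (v j) * ∏ k ∈ univ.erase j, π k (v k)
        = ∏ k, Function.update (fun k a => π k a) j g k (v k) := by
    intro v
    rw [← Finset.mul_prod_erase univ _ (mem_univ j), Function.update_self]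
    congr 1
    exact Finset.prod_congr rfl fun k hk => by
      rw [Function.update_of_ne (Finset.ne_of_mem_erase hk)]
  rw [Finset.sum_congr rfl fun v _ => h1 v, sum_prod_eq,
    ← Finset.mul_prod_erase univ _ (mem_univ j), Function.update_self]
  have h2 : ∏ k ∈ univ.erase j, (∑ a, Function.update (fun k a => π k a) j g k a) = 1 := by
    rw [Finset.prod_congr rfl fun k hk => ?_]
    · exact Finset.prod_const_one
    · rw [Function.update_of_ne (Finset.ne_of_mem_erase hk)]
      exact (hπ k).2
  rw [h2, mul_one]

lemma sum_mul_invariant (j : Fin N) (g : Fin K → ℝ) (G : (Fin N → Fin K) → ℝ)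
    (hG : ∀ v a, G (Function.update v j a) = G v) :
    (K:ℝ) * ∑ v : Fin N → Fin K, g (v j) * G v = (∑ a, g a) * ∑ v : Fin N → Fin K, G v := by
  have key : ∑ x : (Fin N → Fin K) × Fin K, g (x.1 j) * G x.1
      = ∑ x : (Fin N → Fin K) × Fin K, g x.2 * G x.1 := by
    apply Fintype.sum_bijective (fun x : (Fin N → Fin K) × Fin K => (Function.update x.1 j x.2, x.1 j))
    · apply Function.Involutive.bijective
      intro x
      simp [Function.update_idem, Function.update_eq_self]
    · intro x
      simp [hG]
  have lhs : ∑ x : (Fin N → Fin K) × Fin K, g (x.1 j) * G x.1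
      = (K:ℝ) * ∑ v : Fin N → Fin K, g (v j) * G v := by
    rw [Fintype.sum_prod_type]
    simp [Finset.sum_const, mul_comm, Finset.mul_sum]
  have rhs : ∑ x : (Fin N → Fin K) × Fin K, g x.2 * G x.1
      = (∑ a, g a) * ∑ v : Fin N → Fin K, G v := by
    rw [Fintype.sum_prod_type]
    simp only [← Finset.sum_mul, ← Finset.mul_sum]
  rw [← lhs, key, rhs]


variable {F : EuclideanSpace ℝ (Fin K) → EuclideanSpace ℝ (Fin K)}

lemma Vval_update_sub (F : EuclideanSpace ℝ (Fin K) → EuclideanSpace ℝ (Fin K))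
    (π : Fin N → EuclideanSpace ℝ (Fin K)) (i j : Fin N) (p p' : EuclideanSpace ℝ (Fin K)) :
    Vval K N F (Function.update π j p) i - Vval K N F (Function.update π j p') i
      = ∑ v : Fin N → Fin K, (p (v j) - p' (v j)) *
          ((∏ k ∈ univ.erase j, π k (v k)) * F (empDist K N v) (v i)) := by
  unfold Vval
  rw [← Finset.sum_sub_distrib]
  apply Finset.sum_congr rfl
  intro v _
  have h : ∀ q : EuclideanSpace ℝ (Fin K),
      ∏ k, (Function.update π j q) k (v k) = q (v j) * ∏ k ∈ univ.erase j, π k (v k) := by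
    intro q
    rw [← Finset.mul_prod_erase univ _ (mem_univ j), Function.update_self]
    exact congrArg _ (Finset.prod_congr rfl fun k hk => by
      rw [Function.update_of_ne (Finset.ne_of_mem_erase hk)])
  rw [h p, h p']
  ring

lemma key_diag (hN : 0 < N)
    (hFmap : ∀ μ ∈ simplex K, ∀ a : Fin K, F μ a ∈ Set.Icc (0 : ℝ) 1)
    (π : Fin N → EuclideanSpace ℝ (Fin K)) (hπ : ∀ k, π k ∈ simplex K)
    (i : Fin N) (p p' : EuclideanSpace ℝ (Fin K)) :
    |Vval K N F (Function.update π i p) i - Vval K N F (Function.update π i p') i|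
      ≤ ∑ a, |p a - p' a| := by
  rw [Vval_update_sub]
  calc |∑ v : Fin N → Fin K, (p (v i) - p' (v i)) *
          ((∏ k ∈ univ.erase i, π k (v k)) * F (empDist K N v) (v i))|
      ≤ ∑ v : Fin N → Fin K, |(p (v i) - p' (v i)) *
          ((∏ k ∈ univ.erase i, π k (v k)) * F (empDist K N v) (v i))| :=
        Finset.abs_sum_le_sum_abs _ _
    _ ≤ ∑ v : Fin N → Fin K, |p (v i) - p' (v i)| * ∏ k ∈ univ.erase i, π k (v k) := by
        apply Finset.sum_le_sum
        intro v _
        have hP : 0 ≤ ∏ k ∈ univ.erase i, π k (v k) :=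
          Finset.prod_nonneg fun k _ => (hπ k).1 _
        have hF := hFmap _ (empDist_mem hN v) (v i)
        rw [abs_mul, abs_mul]
        have h1 : |∏ k ∈ univ.erase i, π k (v k)| = ∏ k ∈ univ.erase i, π k (v k) :=
          abs_of_nonneg hP
        rw [h1]
        have h2 : |F (empDist K N v) (v i)| ≤ 1 := abs_le.2 ⟨by linarith [hF.1], hF.2⟩
        calc |p (v i) - p' (v i)| * ((∏ k ∈ univ.erase i, π k (v k)) * |F (empDist K N v) (v i)|)
            ≤ |p (v i) - p' (v i)| * ((∏ k ∈ univ.erase i, π k (v k)) * 1) := by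
              apply mul_le_mul_of_nonneg_left _ (abs_nonneg _)
              exact mul_le_mul_of_nonneg_left h2 hP
          _ = |p (v i) - p' (v i)| * ∏ k ∈ univ.erase i, π k (v k) := by ring
    _ = ∑ a, |p a - p' a| := sum_g_prod π hπ i (fun a => |p a - p' a|)

lemma key_off (hK : 0 < K) (hN : 0 < N) {L : ℝ} (hL : 0 ≤ L)
    (hFmap : ∀ μ ∈ simplex K, ∀ a : Fin K, F μ a ∈ Set.Icc (0 : ℝ) 1)
    (hFlip : ∀ μ ∈ simplex K, ∀ μ' ∈ simplex K, ‖F μ - F μ'‖ ≤ L * ‖μ - μ'‖)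
    (π : Fin N → EuclideanSpace ℝ (Fin K)) (hπ : ∀ k, π k ∈ simplex K)
    {i j : Fin N} (hij : j ≠ i) {p p' : EuclideanSpace ℝ (Fin K)}
    (hp : p ∈ simplex K) (hp' : p' ∈ simplex K) :
    |Vval K N F (Function.update π j p) i - Vval K N F (Function.update π j p') i|
      ≤ (2 * L / N) * ∑ a, |p a - p' a| := by
  rw [Vval_update_sub]
  set a₀ : Fin K := ⟨0, hK⟩ with ha₀
  set H : (Fin N → Fin K) → ℝ := fun v =>
    (∏ k ∈ univ.erase j, π k (v k)) * F (empDist K N (Function.update v j a₀)) (v i) with hH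
  have hinv : ∀ (v : Fin N → Fin K) (a : Fin K), H (Function.update v j a) = H v := by
    intro v a
    simp only [hH]
    congr 1
    · exact Finset.prod_congr rfl fun k hk => by
        rw [Function.update_of_ne (Finset.ne_of_mem_erase hk)]
    · rw [Function.update_idem, Function.update_of_ne (Ne.symm hij)]
  have hg0 : ∑ a, (p a - p' a) = 0 := by
    rw [Finset.sum_sub_distrib, hp.2, hp'.2, sub_self]
  have hvanish : ∑ v : Fin N → Fin K, (p (v j) - p' (v j)) * H v = 0 := by
    have := sum_mul_invariant j (fun a => p a - p' a) H hinv
    rw [hg0, zero_mul] at this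
    have hKne : (K:ℝ) ≠ 0 := by positivity
    exact (mul_eq_zero.1 this).resolve_left hKne
  have hsplit : ∑ v : Fin N → Fin K, (p (v j) - p' (v j)) *
          ((∏ k ∈ univ.erase j, π k (v k)) * F (empDist K N v) (v i))
      = ∑ v : Fin N → Fin K, (p (v j) - p' (v j)) *
          ((∏ k ∈ univ.erase j, π k (v k)) *
            (F (empDist K N v) (v i) - F (empDist K N (Function.update v j a₀)) (v i))) := by
    rw [eq_comm, ← sub_zero (∑ v : Fin N → Fin K, (p (v j) - p' (v j)) *
          ((∏ k ∈ univ.erase j, π k (v k)) * F (empDist K N v) (v i))), ← hvanish,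
      ← Finset.sum_sub_distrib]
    apply Finset.sum_congr rfl
    intro v _
    simp only [hH]
    ring
  rw [hsplit]
  have hbd : ∀ v : Fin N → Fin K,
      |F (empDist K N v) (v i) - F (empDist K N (Function.update v j a₀)) (v i)| ≤ 2 * L / N := by
    intro v
    have h1 : |F (empDist K N v) (v i) - F (empDist K N (Function.update v j a₀)) (v i)|
        ≤ ‖F (empDist K N v) - F (empDist K N (Function.update v j a₀))‖ := by
      have := coord_abs_le_norm
        (F (empDist K N v) - F (empDist K N (Function.update v j a₀))) (v i)
      simpa using this
    have h2 := hFlip _ (empDist_mem hN v) _ (empDist_mem hN (Function.update v j a₀))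
    have h3 := empDist_update_close hN v j a₀
    calc |F (empDist K N v) (v i) - F (empDist K N (Function.update v j a₀)) (v i)|
        ≤ L * ‖empDist K N v - empDist K N (Function.update v j a₀)‖ := h1.trans h2
      _ ≤ L * (2 / N) := mul_le_mul_of_nonneg_left h3 hL
      _ = 2 * L / N := by ring
  calc |∑ v : Fin N → Fin K, (p (v j) - p' (v j)) *
          ((∏ k ∈ univ.erase j, π k (v k)) *
            (F (empDist K N v) (v i) - F (empDist K N (Function.update v j a₀)) (v i)))|
      ≤ ∑ v : Fin N → Fin K, |(p (v j) - p' (v j)) *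
          ((∏ k ∈ univ.erase j, π k (v k)) *
            (F (empDist K N v) (v i) - F (empDist K N (Function.update v j a₀)) (v i)))| :=
        Finset.abs_sum_le_sum_abs _ _
    _ ≤ ∑ v : Fin N → Fin K, (2 * L / N) *
          (|p (v j) - p' (v j)| * ∏ k ∈ univ.erase j, π k (v k)) := by
        apply Finset.sum_le_sum
        intro v _
        have hP : 0 ≤ ∏ k ∈ univ.erase j, π k (v k) :=
          Finset.prod_nonneg fun k _ => (hπ k).1 _
        rw [abs_mul, abs_mul, abs_of_nonneg hP]
        calc |p (v j) - p' (v j)| * ((∏ k ∈ univ.erase j, π k (v k)) *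
                |F (empDist K N v) (v i) - F (empDist K N (Function.update v j a₀)) (v i)|)
            ≤ |p (v j) - p' (v j)| * ((∏ k ∈ univ.erase j, π k (v k)) * (2 * L / N)) := by
              apply mul_le_mul_of_nonneg_left _ (abs_nonneg _)
              exact mul_le_mul_of_nonneg_left (hbd v) hP
          _ = (2 * L / N) * (|p (v j) - p' (v j)| * ∏ k ∈ univ.erase j, π k (v k)) := by ring
    _ = (2 * L / N) * ∑ a, |p a - p' a| := by
        rw [← Finset.mul_sum, sum_g_prod π hπ j (fun a => |p a - p' a|)]

lemma single_mem_simplex (a : Fin K) : EuclideanSpace.single a (1:ℝ) ∈ simplex K := by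
  constructor
  · intro b; simp [EuclideanSpace.single_apply]; positivity
  · simp [EuclideanSpace.single_apply]

lemma Vval_mem (hN : 0 < N)
    (hFmap : ∀ μ ∈ simplex K, ∀ a : Fin K, F μ a ∈ Set.Icc (0 : ℝ) 1)
    (π : Fin N → EuclideanSpace ℝ (Fin K)) (hπ : ∀ k, π k ∈ simplex K) (i : Fin N) :
    Vval K N F π i ∈ Set.Icc (0:ℝ) 1 := by
  have hprod : ∀ v : Fin N → Fin K, (0:ℝ) ≤ ∏ k, π k (v k) :=
    fun v => Finset.prod_nonneg fun k _ => (hπ k).1 _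
  have hsum1 : ∑ v : Fin N → Fin K, ∏ k, π k (v k) = 1 := by
    rw [sum_prod_eq]
    exact Finset.prod_eq_one fun k _ => (hπ k).2
  constructor
  · apply Finset.sum_nonneg
    intro v _
    exact mul_nonneg (hprod v) (hFmap _ (empDist_mem hN v) (v i)).1
  · refine le_trans ?_ (le_of_eq hsum1)
    apply Finset.sum_le_sum
    intro v _
    calc (∏ k, π k (v k)) * F (empDist K N v) (v i)
        ≤ (∏ k, π k (v k)) * 1 :=
          mul_le_mul_of_nonneg_left (hFmap _ (empDist_mem hN v) (v i)).2 (hprod v)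
      _ = ∏ k, π k (v k) := mul_one _

lemma ciSup_abs_diff {α : Type*} [Nonempty α] {A B : α → ℝ}
    (hA : BddAbove (Set.range A)) (hB : BddAbove (Set.range B)) {c : ℝ}
    (h : ∀ q, |A q - B q| ≤ c) : |(⨆ q, A q) - ⨆ q, B q| ≤ c := by
  rw [abs_le]
  constructor
  · have : (⨆ q, B q) ≤ (⨆ q, A q) + c := by
      apply ciSup_le
      intro q
      have h1 := (abs_le.1 (h q)).1
      have h2 := le_ciSup hA q
      linarith
    linarith
  · have : (⨆ q, A q) ≤ (⨆ q, B q) + c := by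
      apply ciSup_le
      intro q
      have h1 := (abs_le.1 (h q)).2
      have h2 := le_ciSup hB q
      linarith
    linarith


lemma update_mem_simplex {π : Fin N → EuclideanSpace ℝ (Fin K)} (hπ : ∀ k, π k ∈ simplex K)
    {p : EuclideanSpace ℝ (Fin K)} (hp : p ∈ simplex K) (j : Fin N) :
    ∀ k, Function.update π j p k ∈ simplex K := by
  intro k
  rw [Function.update_apply]
  split
  · exact hp
  · exact hπ k


/-- Lipschitz continuity of the exploitability, Lemma 2 of the paper.
For `L`-Lipschitz `F : Δ_A → [0,1]^K`, players `i, j`, a strategy profile `(π¹,…,π^N)` and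
`π, π̄ ∈ Δ_A`: `|E^i_exp(π, π^{−j}) − E^i_exp(π̄, π^{−j})| ≤ L̄_{j,i} ‖π − π̄‖₂` with
`L̄_{j,i} = √K` if `j = i` and `L̄_{j,i} = 4L√(2K)/N` otherwise. -/
theorem stmt2 (K N : ℕ) (hK : 0 < K) (hN : 0 < N) (L : ℝ) (hL : 0 ≤ L)
    (F : EuclideanSpace ℝ (Fin K) → EuclideanSpace ℝ (Fin K))
    (hFmap : ∀ μ ∈ simplex K, ∀ a : Fin K, F μ a ∈ Set.Icc (0 : ℝ) 1)
    (hFlip : ∀ μ ∈ simplex K, ∀ μ' ∈ simplex K, ‖F μ - F μ'‖ ≤ L * ‖μ - μ'‖)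
    (π : Fin N → EuclideanSpace ℝ (Fin K)) (hπ : ∀ k, π k ∈ simplex K)
    (i j : Fin N) (p p' : EuclideanSpace ℝ (Fin K))
    (hp : p ∈ simplex K) (hp' : p' ∈ simplex K) :
    |expl K N F (Function.update π j p) i - expl K N F (Function.update π j p') i|
      ≤ (if j = i then Real.sqrt K else 4 * L * Real.sqrt (2 * K) / N) * ‖p - p'‖ := by
  haveI : Nonempty ↥(simplex K) := ⟨⟨EuclideanSpace.single ⟨0, hK⟩ 1, single_mem_simplex _⟩⟩
  have hl1 : ∑ a, |p a - p' a| ≤ Real.sqrt K * ‖p - p'‖ := by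
    have h := l1_le_sqrtK (p - p')
    have he : ∀ a, (p - p') a = p a - p' a := fun a => rfl
    calc ∑ a, |p a - p' a| = ∑ a, |(p - p') a| := by
          exact Finset.sum_congr rfl fun a _ => by rw [he]
      _ ≤ Real.sqrt K * ‖p - p'‖ := h
  by_cases hji : j = i
  · subst hji
    rw [if_pos rfl]
    unfold expl
    have hsupeq : (⨆ q : simplex K,
          Vval K N F (Function.update (Function.update π j p) j (q : EuclideanSpace ℝ (Fin K))) j)
        = ⨆ q : simplex K,
          Vval K N F (Function.update (Function.update π j p') j (q : EuclideanSpace ℝ (Fin K))) j := by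
      simp only [Function.update_idem]
    rw [hsupeq]
    have habs : |(⨆ q : simplex K,
          Vval K N F (Function.update (Function.update π j p') j (q : EuclideanSpace ℝ (Fin K))) j)
          - Vval K N F (Function.update π j p) j
        - ((⨆ q : simplex K,
          Vval K N F (Function.update (Function.update π j p') j (q : EuclideanSpace ℝ (Fin K))) j)
          - Vval K N F (Function.update π j p') j)|
        = |Vval K N F (Function.update π j p) j - Vval K N F (Function.update π j p') j| := by
      rw [← abs_neg]
      congr 1
      ring
    rw [habs]
    exact (key_diag hN hFmap π hπ j p p').trans hl1
  · rw [if_neg hji]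
    unfold expl
    set c : ℝ := (2 * L / N) * ∑ a, |p a - p' a| with hc
    have hV : |Vval K N F (Function.update π j p) i - Vval K N F (Function.update π j p') i| ≤ c :=
      key_off hK hN hL hFmap hFlip π hπ hji hp hp'
    set A : ↥(simplex K) → ℝ := fun q =>
      Vval K N F (Function.update (Function.update π j p) i (q : EuclideanSpace ℝ (Fin K))) i with hA
    set B : ↥(simplex K) → ℝ := fun q =>
      Vval K N F (Function.update (Function.update π j p') i (q : EuclideanSpace ℝ (Fin K))) i with hB
    have hAmem : ∀ q : ↥(simplex K), A q ∈ Set.Icc (0:ℝ) 1 := fun q =>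
      Vval_mem hN hFmap _ (update_mem_simplex (update_mem_simplex hπ hp j) q.2 i) i
    have hBmem : ∀ q : ↥(simplex K), B q ∈ Set.Icc (0:ℝ) 1 := fun q =>
      Vval_mem hN hFmap _ (update_mem_simplex (update_mem_simplex hπ hp' j) q.2 i) i
    have hAb : BddAbove (Set.range A) := ⟨1, by rintro y ⟨q, rfl⟩; exact (hAmem q).2⟩
    have hBb : BddAbove (Set.range B) := ⟨1, by rintro y ⟨q, rfl⟩; exact (hBmem q).2⟩
    have hABq : ∀ q : ↥(simplex K), |A q - B q| ≤ c := by
      intro q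
      have hcomm : ∀ r : EuclideanSpace ℝ (Fin K),
          Function.update (Function.update π j r) i (q : EuclideanSpace ℝ (Fin K))
            = Function.update (Function.update π i (q : EuclideanSpace ℝ (Fin K))) j r :=
        fun r => Function.update_comm hji r (q : EuclideanSpace ℝ (Fin K)) π
      rw [hA, hB]
      simp only [hcomm]
      exact key_off hK hN hL hFmap hFlip _ (update_mem_simplex hπ q.2 i) hji hp hp'
    have hS : |(⨆ q, A q) - ⨆ q, B q| ≤ c := ciSup_abs_diff hAb hBb hABq
    have h2K : Real.sqrt K ≤ Real.sqrt (2 * K) := by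
      apply Real.sqrt_le_sqrt
      have : (0:ℝ) ≤ (K:ℝ) := Nat.cast_nonneg K
      linarith
    calc |(⨆ q, A q) - Vval K N F (Function.update π j p) i
          - ((⨆ q, B q) - Vval K N F (Function.update π j p') i)|
        = |((⨆ q, A q) - ⨆ q, B q)
            + (Vval K N F (Function.update π j p') i - Vval K N F (Function.update π j p) i)| := by
          congr 1; ring
      _ ≤ |(⨆ q, A q) - ⨆ q, B q|
            + |Vval K N F (Function.update π j p') i - Vval K N F (Function.update π j p) i| :=
          abs_add_le _ _
      _ ≤ c + c := by
          rw [abs_sub_comm (Vval K N F (Function.update π j p') i)]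
          exact add_le_add hS hV
      _ = (4 * L / N) * ∑ a, |p a - p' a| := by rw [hc]; ring
      _ ≤ (4 * L / N) * (Real.sqrt K * ‖p - p'‖) :=
          mul_le_mul_of_nonneg_left hl1 (by positivity)
      _ ≤ 4 * L * Real.sqrt (2 * K) / N * ‖p - p'‖ := by
          have heq : (4 * L / N) * (Real.sqrt K * ‖p - p'‖)
              = 4 * L * Real.sqrt K / N * ‖p - p'‖ := by ring
          rw [heq]
          gcongr
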